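/- Let n = 2 and α ≥ 1. There exists a deterministic allocation rule x ∈ T_D(σ) with R(ρ,x) ≤ α if and only if there is no α-deterministic conflict pair, i.e., if and only if max(ρ₂(s), ρ₁(s′)) ≥ 1/α for all profiles s ≺ s′. -/
import Mathlib


namespace Stmt15

variable {k : ℕ}

noncomputable def rho1 (v1 v2 : Fin k × Fin k → ℝ) (s : Fin k × Fin k) : ℝ :=
  v1 s / max (v1 s) (v2 s)

noncomputable def rho2 (v1 v2 : Fin k × Fin k → ℝ) (s : Fin k × Fin k) : ℝ :=
  v2 s / max (v1 s) (v2 s)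

/-- One step of the reachability relation. -/
def step (v1 v2 : Fin k × Fin k → ℝ) (p q : Fin k × Fin k) : Prop :=
  (p.2 = q.2 ∧ v1 p < v1 q) ∨ (p.1 = q.1 ∧ v2 q < v2 p)

/-- Membership in the truthful polytope `T(σ)` (two agents). -/
def InT (v1 v2 x1 x2 : Fin k × Fin k → ℝ) : Prop :=
  (∀ s, 0 ≤ x1 s ∧ x1 s ≤ 1) ∧ (∀ s, 0 ≤ x2 s ∧ x2 s ≤ 1) ∧
  (∀ s, x1 s + x2 s = 1) ∧
  (∀ a b c : Fin k, v1 (a, c) < v1 (b, c) → x1 (a, c) ≤ x1 (b, c)) ∧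
  (∀ a c d : Fin k, v2 (a, c) < v2 (a, d) → x2 (a, c) ≤ x2 (a, d))

lemma rho1_pos (v1 v2 : Fin k × Fin k → ℝ) (hv1 : ∀ s, 0 < v1 s) (hv2 : ∀ s, 0 < v2 s)
    (s : Fin k × Fin k) : 0 < rho1 v1 v2 s :=
  div_pos (hv1 s) (lt_of_lt_of_le (hv1 s) (le_max_left _ _))

lemma rho2_pos (v1 v2 : Fin k × Fin k → ℝ) (hv1 : ∀ s, 0 < v1 s) (hv2 : ∀ s, 0 < v2 s)
    (s : Fin k × Fin k) : 0 < rho2 v1 v2 s :=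
  div_pos (hv2 s) (lt_of_lt_of_le (hv1 s) (le_max_left _ _))

lemma rho_max_one (v1 v2 : Fin k × Fin k → ℝ) (hv1 : ∀ s, 0 < v1 s) (hv2 : ∀ s, 0 < v2 s)
    (s : Fin k × Fin k) : rho1 v1 v2 s = 1 ∨ rho2 v1 v2 s = 1 := by
  rcases le_total (v1 s) (v2 s) with h | h
  · right
    rw [rho2, max_eq_right h, div_self (hv2 s).ne']
  · left
    rw [rho1, max_eq_left h, div_self (hv1 s).ne']

/-- For a truthful rule, `x1` is monotone along the reachability relation. -/
lemma mono_step (v1 v2 x1 x2 : Fin k × Fin k → ℝ) (h : InT v1 v2 x1 x2)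
    {p q : Fin k × Fin k} (hpq : step v1 v2 p q) : x1 p ≤ x1 q := by
  obtain ⟨h1, h2, hsum, h4, h5⟩ := h
  obtain ⟨a, c⟩ := p
  obtain ⟨b, d⟩ := q
  rcases hpq with ⟨he, hlt⟩ | ⟨he, hlt⟩ <;> simp only at he <;> subst he
  · exact h4 a b c hlt
  · have := h5 a d c hlt
    have e1 := hsum (a, c)
    have e2 := hsum (a, d)
    linarith

lemma mono_trans (v1 v2 x1 x2 : Fin k × Fin k → ℝ) (h : InT v1 v2 x1 x2)
    {p q : Fin k × Fin k} (hpq : Relation.TransGen (step v1 v2) p q) : x1 p ≤ x1 q := by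
  induction hpq with
  | single h' => exact mono_step v1 v2 x1 x2 h h'
  | tail _ h' ih => exact le_trans ih (mono_step v1 v2 x1 x2 h h')

/-- with `n = 2`, a deterministic truthful allocation rule of ratio at most
`α` exists iff there is no `α`-deterministic conflict pair. -/
theorem stmt15 (k : ℕ) [NeZero k] (α : ℝ) (hα : 1 ≤ α)
    (v1 v2 : Fin k × Fin k → ℝ)
    (hv1 : ∀ s, 0 < v1 s) (hv2 : ∀ s, 0 < v2 s) :
    (∃ x1 x2 : Fin k × Fin k → ℝ, InT v1 v2 x1 x2 ∧
      (∀ s, x1 s = 0 ∨ x1 s = 1) ∧ (∀ s, x2 s = 0 ∨ x2 s = 1) ∧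
      Finset.univ.sup' Finset.univ_nonempty
        (fun s : Fin k × Fin k => x1 s / rho1 v1 v2 s + x2 s / rho2 v1 v2 s) ≤ α) ↔
    (∀ s s', Relation.TransGen (step v1 v2) s s' →
      1 / α ≤ max (rho2 v1 v2 s) (rho1 v1 v2 s')) := by
  have hα0 : (0:ℝ) < α := lt_of_lt_of_le one_pos hα
  have hρ1 := rho1_pos v1 v2 hv1 hv2
  have hρ2 := rho2_pos v1 v2 hv1 hv2
  constructor
  · rintro ⟨x1, x2, hT, hd1, hd2, hsup⟩ s s' hss'
    have hterm : ∀ t : Fin k × Fin k,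
        x1 t / rho1 v1 v2 t + x2 t / rho2 v1 v2 t ≤ α := by
      intro t
      refine le_trans ?_ hsup
      exact Finset.le_sup' (fun t => x1 t / rho1 v1 v2 t + x2 t / rho2 v1 v2 t) (Finset.mem_univ t)
    have hmono := mono_trans v1 v2 x1 x2 hT hss'
    obtain ⟨h1, h2, hsum, _, _⟩ := hT
    rcases hd1 s with h0 | h1s
    · -- x1 s = 0, so x2 s = 1, term at s is 1 / ρ₂ s
      have hx2 : x2 s = 1 := by have := hsum s; linarith
      have := hterm s
      rw [h0, hx2, zero_div, zero_add, one_div] at this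
      have : 1 / α ≤ rho2 v1 v2 s := by
        rw [one_div_le hα0 (hρ2 s)]
        rwa [one_div]
      exact le_trans this (le_max_left _ _)
    · -- x1 s = 1, hence x1 s' = 1
      have hx1' : x1 s' = 1 := by
        have := (h1 s').2
        rcases hd1 s' with h | h
        · rw [h1s, h] at hmono; linarith
        · exact h
      have hx2' : x2 s' = 0 := by have := hsum s'; linarith
      have := hterm s'
      rw [hx1', hx2', zero_div, add_zero, one_div] at this
      have : 1 / α ≤ rho1 v1 v2 s' := by
        rw [one_div_le hα0 (hρ1 s')]
        rwa [one_div]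
      exact le_trans this (le_max_right _ _)
  · intro h
    classical
    -- define x1 s = 1 iff some p with ρ₂ p < 1/α reaches s
    set P : Fin k × Fin k → Prop := fun s =>
      ∃ p, Relation.ReflTransGen (step v1 v2) p s ∧ rho2 v1 v2 p < 1 / α with hP
    set x1 : Fin k × Fin k → ℝ := fun s => if P s then 1 else 0 with hx1
    have hup : ∀ p q, step v1 v2 p q → x1 p ≤ x1 q := by
      intro p q hpq
      simp only [hx1]
      by_cases h1 : P p
      · have h2 : P q := ⟨h1.choose, h1.choose_spec.1.tail hpq, h1.choose_spec.2⟩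
        rw [if_pos h1, if_pos h2]
      · rw [if_neg h1]; split_ifs <;> norm_num
    refine ⟨x1, fun s => 1 - x1 s, ?_, ?_, ?_, ?_⟩
    · refine ⟨?_, ?_, ?_, ?_, ?_⟩
      · intro s; simp only [hx1]; split_ifs <;> norm_num
      · intro s; simp only [hx1]; split_ifs <;> norm_num
      · intro s; ring
      · intro a b c hlt
        exact hup (a, c) (b, c) (Or.inl ⟨rfl, hlt⟩)
      · intro a c d hlt
        have := hup (a, d) (a, c) (Or.inr ⟨rfl, hlt⟩)
        dsimp only
        linarith
    · intro s; simp only [hx1]; split_ifs <;> simp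
    · intro s; simp only [hx1]; split_ifs <;> simp
    · -- sup bound
      apply Finset.sup'_le
      intro s _
      simp only [hx1]
      by_cases hs : P s
      · rw [if_pos hs]
        have hρ : 1 / α ≤ rho1 v1 v2 s := by
          obtain ⟨p, hrt, hp⟩ := hs
          rcases Relation.reflTransGen_iff_eq_or_transGen.mp hrt with rfl | htg
          · -- p = s : ρ₂ s < 1/α ≤ 1 so ρ₁ s = 1
            rcases rho_max_one v1 v2 hv1 hv2 s with h1 | h1
            · rw [h1]; exact le_trans (by rw [div_le_one hα0]; exact hα) le_rfl
            · exfalso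
              have : (1:ℝ)/α ≤ 1 := by rw [div_le_one hα0]; exact hα
              rw [h1] at hp; linarith
          · have := h p s htg
            rcases le_max_iff.mp this with h' | h'
            · linarith
            · exact h'
        have : (1:ℝ) / rho1 v1 v2 s ≤ α := by
          rw [one_div_le (hρ1 s) hα0]; exact hρ
        calc 1 / rho1 v1 v2 s + (1 - 1) / rho2 v1 v2 s
            = 1 / rho1 v1 v2 s := by ring
          _ ≤ α := this
      · rw [if_neg hs]
        have hρ : 1 / α ≤ rho2 v1 v2 s := by
          by_contra hlt
          push_neg at hlt
          exact hs ⟨s, Relation.ReflTransGen.refl, hlt⟩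
        have : (1:ℝ) / rho2 v1 v2 s ≤ α := by
          rw [one_div_le (hρ2 s) hα0]; exact hρ
        calc (0:ℝ) / rho1 v1 v2 s + (1 - 0) / rho2 v1 v2 s
            = 1 / rho2 v1 v2 s := by ring
          _ ≤ α := this

end Stmt15
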